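/- Let W and T be real n×n matrices with W symmetric positive definite and T symmetric positive semidefinite, and let μ_min and μ_max be the smallest and largest eigenvalues of S = W^{-1/2} T W^{-1/2}. Assume μ_min < 1 < μ_max. If the positive parameters α and β satisfy (1-μ_min)/(1+μ_min) < α < (μ_max+1)/(μ_max-1) and (μ_max-1)/(μ_max+1) < β < (1+μ_min)/(1-μ_min), then the spectral radius of the TTSCSP iteration matrix satisfies ρ(G_{α,β}) < 1. -/

import Mathlib

open Matrix

section
open scoped ComplexOrder

/-- The positive semidefinite square root of a positive semidefinite matrix
(Mathlib's former `Matrix.PosSemidef.sqrt`, restored with its old definition). -/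
noncomputable def Matrix.PosSemidef.sqrt {n 𝕜 : Type*} [Fintype n] [DecidableEq n] [RCLike 𝕜]
    {A : Matrix n n 𝕜} (hA : A.PosSemidef) : Matrix n n 𝕜 :=
  hA.1.eigenvectorUnitary.1 * diagonal ((↑) ∘ (√·) ∘ hA.1.eigenvalues) *
  (star hA.1.eigenvectorUnitary : Matrix n n 𝕜)

end

section
open scoped ComplexOrder

lemma ttscsp_sqrt_mul_self {n 𝕜 : Type*} [Fintype n] [DecidableEq n] [RCLike 𝕜]
    {A : Matrix n n 𝕜} (hA : A.PosSemidef) : hA.sqrt * hA.sqrt = A := by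
  have hC : star (hA.1.eigenvectorUnitary : Matrix n n 𝕜) * hA.1.eigenvectorUnitary = 1 :=
    Matrix.mem_unitaryGroup_iff'.mp hA.1.eigenvectorUnitary.2
  have hE : diagonal ((↑) ∘ (√·) ∘ hA.1.eigenvalues : n → 𝕜) *
      diagonal ((↑) ∘ (√·) ∘ hA.1.eigenvalues : n → 𝕜)
      = diagonal (RCLike.ofReal ∘ hA.1.eigenvalues) := by
    rw [diagonal_mul_diagonal]
    congr 1
    funext i
    simp only [Function.comp_apply]
    rw [← RCLike.ofReal_mul, Real.mul_self_sqrt (hA.eigenvalues_nonneg i)]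
  conv_rhs => rw [hA.1.spectral_theorem, Unitary.conjStarAlgAut_apply, ← hE]
  rw [Matrix.PosSemidef.sqrt]
  simp only [Matrix.mul_assoc]
  rw [← Matrix.mul_assoc (star _) (hA.1.eigenvectorUnitary : Matrix n n 𝕜), hC, Matrix.one_mul]

lemma ttscsp_sqrt_isHermitian {n 𝕜 : Type*} [Fintype n] [DecidableEq n] [RCLike 𝕜]
    {A : Matrix n n 𝕜} (hA : A.PosSemidef) : hA.sqrt.IsHermitian := by
  simp [Matrix.IsHermitian, Matrix.PosSemidef.sqrt, Matrix.conjTranspose_mul,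
    Matrix.diagonal_conjTranspose, Matrix.mul_assoc, Matrix.star_eq_conjTranspose,
    Matrix.conjTranspose_conjTranspose]
  have hs : ∀ f : n → ℝ, star (RCLike.ofReal ∘ f : n → 𝕜) = RCLike.ofReal ∘ f := fun f => by
    funext i
    simp [Pi.star_apply]
  rw [hs]

end

lemma ttscsp_scalar (α β μ μmin μmax : ℝ)
    (hα : 0 < α) (hβ : 0 < β) (hμ : 0 ≤ μ) (h1 : μmin ≤ μ) (h2 : μ ≤ μmax)
    (hA1 : 1 - μmin < α * (1 + μmin)) (hA2 : α * (μmax - 1) < μmax + 1)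
    (hB1 : μmax - 1 < β * (μmax + 1)) (hB2 : β * (1 - μmin) < 1 + μmin) :
    |(1 + β * μ)⁻¹ * (μ - β) * (α + μ)⁻¹ * (1 - α * μ)| < 1 := by
  have hd1 : (0:ℝ) < 1 + β * μ := by nlinarith
  have hd2 : (0:ℝ) < α + μ := by linarith
  have P1 : (0:ℝ) < 1 + β * μ - (μ - β) := by
    rcases le_or_gt β 1 with h | h
    · nlinarith [mul_nonneg (sub_nonneg.2 h2) (sub_nonneg.2 h)]
    · nlinarith [mul_nonneg hμ (le_of_lt (sub_pos.2 h))]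
  have P2 : (0:ℝ) < 1 + β * μ + (μ - β) := by
    nlinarith [mul_nonneg (sub_nonneg.2 h1) (le_of_lt hβ)]
  have P3 : (0:ℝ) < α + μ - (1 - α * μ) := by
    nlinarith [mul_nonneg (sub_nonneg.2 h1) (le_of_lt hα)]
  have P4 : (0:ℝ) < α + μ + (1 - α * μ) := by
    rcases le_or_gt α 1 with h | h
    · nlinarith [mul_nonneg hμ (sub_nonneg.2 h)]
    · nlinarith [mul_nonneg (sub_nonneg.2 h2) (le_of_lt (sub_pos.2 h))]
  have h5 : |μ - β| < 1 + β * μ := abs_lt.2 ⟨by linarith, by linarith⟩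
  have h6 : |1 - α * μ| < α + μ := abs_lt.2 ⟨by linarith, by linarith⟩
  have heq : (1 + β * μ)⁻¹ * (μ - β) * (α + μ)⁻¹ * (1 - α * μ)
      = ((μ - β) * (1 - α * μ)) / ((1 + β * μ) * (α + μ)) := by
    field_simp
  rw [heq, abs_div, abs_mul, abs_of_pos (mul_pos hd1 hd2), div_lt_one (mul_pos hd1 hd2)]
  exact mul_lt_mul'' h5 h6 (abs_nonneg _) (abs_nonneg _)

section MatrixHelpers

variable {m : Type*} [Fintype m] [DecidableEq m] {K : Type*} [Field K] [StarRing K]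

/-- inverse of a sandwich `Q * A * Q` (unconditional, via `mul_inv_rev`). -/
lemma ttscsp_sandwich_inv (Q A : Matrix m m K) :
    (Q * A * Q)⁻¹ = Q⁻¹ * A⁻¹ * Q⁻¹ := by
  rw [Matrix.mul_inv_rev, Matrix.mul_inv_rev, Matrix.mul_assoc]

/-- collapse a product of four sandwiches. -/
lemma ttscsp_collapse (Q A B C D : Matrix m m K) (h1 : Q⁻¹ * Q = 1) (h2 : Q * Q⁻¹ = 1) :
    (Q⁻¹ * A * Q⁻¹) * (Q * B * Q) * (Q⁻¹ * C * Q⁻¹) * (Q * D * Q)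
      = Q⁻¹ * (A * B * C * D) * Q := by
  have c1 : ∀ X : Matrix m m K, Q⁻¹ * (Q * X) = X := fun X => by
    rw [← Matrix.mul_assoc, h1, Matrix.one_mul]
  have c2 : ∀ X : Matrix m m K, Q * (Q⁻¹ * X) = X := fun X => by
    rw [← Matrix.mul_assoc, h2, Matrix.one_mul]
  simp only [Matrix.mul_assoc, c1, c2]

lemma ttscsp_conj_inv (U A : Matrix m m K) (h1 : U * star U = 1) (h2 : star U * U = 1) :
    (U * A * star U)⁻¹ = U * A⁻¹ * star U := by
  have hU : U⁻¹ = star U := Matrix.inv_eq_left_inv h2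
  have hU' : (star U)⁻¹ = U := Matrix.inv_eq_left_inv h1
  rw [Matrix.mul_inv_rev, Matrix.mul_inv_rev, hU, hU', ← Matrix.mul_assoc]

lemma ttscsp_conj_mul (U A B : Matrix m m K) (h2 : star U * U = 1) :
    (U * A * star U) * (U * B * star U) = U * (A * B) * star U := by
  have c : ∀ X : Matrix m m K, star U * (U * X) = X := fun X => by
    rw [← Matrix.mul_assoc, h2, Matrix.one_mul]
  simp only [Matrix.mul_assoc, c]

end MatrixHelpers

theorem ttscsp_convergence
    {n : ℕ} (hn : 0 < n)
    (W T : Matrix (Fin n) (Fin n) ℝ)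
    (hW : W.PosDef) (hT : T.PosSemidef)
    (S : Matrix (Fin n) (Fin n) ℝ)
    (hSdef : S = (hW.posSemidef.sqrt)⁻¹ * T * (hW.posSemidef.sqrt)⁻¹)
    (hS : S.IsHermitian)
    (μmin μmax : ℝ)
    (hμmin : μmin = ⨅ i, hS.eigenvalues i)
    (hμmax : μmax = ⨆ i, hS.eigenvalues i)
    (hmin1 : μmin < 1) (hmax1 : 1 < μmax)
    (α β : ℝ) (hα : 0 < α) (hβ : 0 < β)
    (hα1 : (1 - μmin) / (1 + μmin) < α) (hα2 : α < (μmax + 1) / (μmax - 1))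
    (hβ1 : (μmax - 1) / (μmax + 1) < β) (hβ2 : β < (1 + μmin) / (1 - μmin)) :
    spectralRadius ℂ
      (((W + β • T)⁻¹ * (T - β • W) * (α • W + T)⁻¹ * (W - α • T)).map Complex.ofReal) < 1 := by
  haveI : Nonempty (Fin n) := ⟨⟨0, hn⟩⟩
  set Q : Matrix (Fin n) (Fin n) ℝ := hW.posSemidef.sqrt with hQdef
  have hQQ : Q * Q = W := ttscsp_sqrt_mul_self hW.posSemidef
  have hQherm : Q.IsHermitian := ttscsp_sqrt_isHermitian hW.posSemidef
  have hdetQ : IsUnit Q.det := by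
    refine isUnit_iff_ne_zero.2 fun h => ?_
    have : W.det = 0 := by rw [← hQQ, Matrix.det_mul, h, mul_zero]
    exact hW.det_pos.ne' this
  have hQiQ : Q⁻¹ * Q = 1 := Matrix.nonsing_inv_mul _ hdetQ
  have hQQi : Q * Q⁻¹ = 1 := Matrix.mul_nonsing_inv _ hdetQ
  have hTQ : Q * S * Q = T := by
    rw [hSdef]
    calc Q * (Q⁻¹ * T * Q⁻¹) * Q = (Q * Q⁻¹) * T * (Q⁻¹ * Q) := by
          simp only [Matrix.mul_assoc]
      _ = T := by rw [hQiQ, hQQi, Matrix.one_mul, Matrix.mul_one]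
  -- S is positive semidefinite
  have hQinv_herm : (Q⁻¹).IsHermitian := hQherm.inv
  have hSpos : S.PosSemidef := by
    have := hT.mul_mul_conjTranspose_same Q⁻¹
    rwa [hQinv_herm.eq, ← hSdef] at this
  -- eigenvalue bounds
  set ev : Fin n → ℝ := hS.eigenvalues with hevdef
  have hev0 : ∀ i, 0 ≤ ev i := fun i => hSpos.eigenvalues_nonneg i
  have hevmin : ∀ i, μmin ≤ ev i := fun i =>
    hμmin ▸ ciInf_le (Set.Finite.bddBelow (Set.finite_range _)) i
  have hevmax : ∀ i, ev i ≤ μmax := fun i =>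
    hμmax ▸ le_ciSup (Set.Finite.bddAbove (Set.finite_range _)) i
  have hmin0 : 0 ≤ μmin := hμmin ▸ le_ciInf hev0
  have hA1' : 1 - μmin < α * (1 + μmin) := by
    rw [div_lt_iff₀ (by linarith : (0:ℝ) < 1 + μmin)] at hα1; linarith [hα1]
  have hA2' : α * (μmax - 1) < μmax + 1 := by
    rw [lt_div_iff₀ (by linarith : (0:ℝ) < μmax - 1)] at hα2; linarith [hα2]
  have hB1' : μmax - 1 < β * (μmax + 1) := by
    rw [div_lt_iff₀ (by linarith : (0:ℝ) < μmax + 1)] at hβ1; linarith [hβ1]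
  have hB2' : β * (1 - μmin) < 1 + μmin := by
    rw [lt_div_iff₀ (by linarith : (0:ℝ) < 1 - μmin)] at hβ2; linarith [hβ2]
  -- the scalar eigenvalue function
  set g : Fin n → ℝ :=
    fun i => (1 + β * ev i)⁻¹ * (ev i - β) * ((α + ev i)⁻¹ * (1 - α * ev i)) with hgdef
  have hg : ∀ i, |g i| < 1 := by
    intro i
    have := ttscsp_scalar α β (ev i) μmin μmax hα hβ (hev0 i) (hevmin i) (hevmax i)
      hA1' hA2' hB1' hB2'
    rw [hgdef]
    calc |(1 + β * ev i)⁻¹ * (ev i - β) * ((α + ev i)⁻¹ * (1 - α * ev i))|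
        = |(1 + β * ev i)⁻¹ * (ev i - β) * (α + ev i)⁻¹ * (1 - α * ev i)| := by
          ring_nf
      _ < 1 := this
  -- spectral decomposition of S
  set U : Matrix (Fin n) (Fin n) ℝ := (hS.eigenvectorUnitary : Matrix (Fin n) (Fin n) ℝ)
    with hUdef
  have hU1 : U * star U = 1 := Matrix.mem_unitaryGroup_iff.mp hS.eigenvectorUnitary.2
  have hU2 : star U * U = 1 := Matrix.mem_unitaryGroup_iff'.mp hS.eigenvectorUnitary.2
  have hSpec : S = U * diagonal ev * star U := by
    have := hS.spectral_theorem
    rwa [Unitary.conjStarAlgAut_apply, RCLike.ofReal_real_eq_id, Function.id_comp] at this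
  -- four sandwich identities over ℝ at the S level
  have e1 : (1 : Matrix (Fin n) (Fin n) ℝ) + β • S
      = U * diagonal (fun i => 1 + β * ev i) * star U := by
    have h : (1 : Matrix (Fin n) (Fin n) ℝ) + β • diagonal ev
        = diagonal (fun i => 1 + β * ev i) := by
      rw [← diagonal_one, ← diagonal_smul, diagonal_add, diagonal_eq_diagonal_iff]
      intro i; simp
    rw [← h, Matrix.mul_add, Matrix.add_mul, Matrix.mul_smul, Matrix.smul_mul,
      Matrix.mul_one, hU1, ← hSpec]
  have e2 : S - β • (1 : Matrix (Fin n) (Fin n) ℝ)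
      = U * diagonal (fun i => ev i - β) * star U := by
    have h : diagonal ev - β • (1 : Matrix (Fin n) (Fin n) ℝ)
        = diagonal (fun i => ev i - β) := by
      rw [← diagonal_one, ← diagonal_smul, diagonal_sub, diagonal_eq_diagonal_iff]
      intro i; simp
    rw [← h, Matrix.mul_sub, Matrix.sub_mul, Matrix.mul_smul, Matrix.smul_mul,
      Matrix.mul_one, hU1, ← hSpec]
  have e3 : α • (1 : Matrix (Fin n) (Fin n) ℝ) + S
      = U * diagonal (fun i => α + ev i) * star U := by
    have h : α • (1 : Matrix (Fin n) (Fin n) ℝ) + diagonal ev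
        = diagonal (fun i => α + ev i) := by
      rw [← diagonal_one, ← diagonal_smul, diagonal_add, diagonal_eq_diagonal_iff]
      intro i; simp
    rw [← h, Matrix.mul_add, Matrix.add_mul, Matrix.mul_smul, Matrix.smul_mul,
      Matrix.mul_one, hU1, ← hSpec]
  have e4 : (1 : Matrix (Fin n) (Fin n) ℝ) - α • S
      = U * diagonal (fun i => 1 - α * ev i) * star U := by
    have h : (1 : Matrix (Fin n) (Fin n) ℝ) - α • diagonal ev
        = diagonal (fun i => 1 - α * ev i) := by
      rw [← diagonal_one, ← diagonal_smul, diagonal_sub, diagonal_eq_diagonal_iff]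
      intro i; simp
    rw [← h, Matrix.mul_sub, Matrix.sub_mul, Matrix.mul_smul, Matrix.smul_mul,
      Matrix.mul_one, hU1, ← hSpec]
  -- the matrix H and its diagonalization
  have hdiaginv : ∀ v : Fin n → ℝ, (∀ i, v i ≠ 0) →
      (diagonal v)⁻¹ = diagonal (fun i => (v i)⁻¹) := by
    intro v hv
    refine Matrix.inv_eq_left_inv ?_
    rw [diagonal_mul_diagonal, ← diagonal_one, diagonal_eq_diagonal_iff]
    intro i
    exact inv_mul_cancel₀ (hv i)
  have h1ne : ∀ i, (1 : ℝ) + β * ev i ≠ 0 := fun i =>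
    ne_of_gt (by have := hev0 i; nlinarith)
  have h3ne : ∀ i, α + ev i ≠ 0 := fun i =>
    ne_of_gt (by have := hev0 i; linarith)
  have hH : ((1 : Matrix (Fin n) (Fin n) ℝ) + β • S)⁻¹ * (S - β • 1) * (α • 1 + S)⁻¹
        * (1 - α • S) = U * diagonal g * star U := by
    rw [e1, e2, e3, e4, ttscsp_conj_inv _ _ hU1 hU2, ttscsp_conj_inv _ _ hU1 hU2,
      ttscsp_conj_mul _ _ _ hU2, ttscsp_conj_mul _ _ _ hU2, ttscsp_conj_mul _ _ _ hU2,
      hdiaginv _ h1ne, hdiaginv _ h3ne, diagonal_mul_diagonal, diagonal_mul_diagonal,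
      diagonal_mul_diagonal]
    congr 1
    congr 1
    rw [diagonal_eq_diagonal_iff]
    intro i
    simp only [Pi.mul_apply, hgdef]
    ring
  -- the four W-level sandwich identities
  have f1 : W + β • T = Q * ((1 : Matrix (Fin n) (Fin n) ℝ) + β • S) * Q := by
    rw [Matrix.mul_add, Matrix.add_mul, Matrix.mul_smul, Matrix.smul_mul, Matrix.mul_one,
      hQQ, hTQ]
  have f2 : T - β • W = Q * (S - β • (1 : Matrix (Fin n) (Fin n) ℝ)) * Q := by
    rw [Matrix.mul_sub, Matrix.sub_mul, Matrix.mul_smul, Matrix.smul_mul, Matrix.mul_one,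
      hQQ, hTQ]
  have f3 : α • W + T = Q * (α • (1 : Matrix (Fin n) (Fin n) ℝ) + S) * Q := by
    rw [Matrix.mul_add, Matrix.add_mul, Matrix.mul_smul, Matrix.smul_mul, Matrix.mul_one,
      hQQ, hTQ]
  have f4 : W - α • T = Q * ((1 : Matrix (Fin n) (Fin n) ℝ) - α • S) * Q := by
    rw [Matrix.mul_sub, Matrix.sub_mul, Matrix.mul_smul, Matrix.smul_mul, Matrix.mul_one,
      hQQ, hTQ]
  -- the global similarity
  set V : Matrix (Fin n) (Fin n) ℝ := Q⁻¹ * U with hVdef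
  set V' : Matrix (Fin n) (Fin n) ℝ := star U * Q with hV'def
  have hG : (W + β • T)⁻¹ * (T - β • W) * (α • W + T)⁻¹ * (W - α • T)
      = V * diagonal g * V' := by
    rw [f1, f2, f3, f4, ttscsp_sandwich_inv, ttscsp_sandwich_inv,
      ttscsp_collapse _ _ _ _ _ hQiQ hQQi, hH, hVdef, hV'def]
    simp only [Matrix.mul_assoc]
  have hVV' : V * V' = 1 := by
    rw [hVdef, hV'def]
    calc Q⁻¹ * U * (star U * Q) = Q⁻¹ * ((U * star U) * Q) := by
          simp only [Matrix.mul_assoc]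
      _ = 1 := by rw [hU1, Matrix.one_mul, hQiQ]
  have hV'V : V' * V = 1 := by
    rw [hVdef, hV'def]
    calc star U * Q * (Q⁻¹ * U) = star U * ((Q * Q⁻¹) * U) := by
          simp only [Matrix.mul_assoc]
      _ = 1 := by rw [hQQi, Matrix.one_mul, hU2]
  -- move to ℂ
  have map_mul' : ∀ X Y : Matrix (Fin n) (Fin n) ℝ,
      (X * Y).map Complex.ofReal = X.map Complex.ofReal * Y.map Complex.ofReal := by
    intro X Y
    exact Matrix.map_mul (f := Complex.ofRealHom)
  have map_one' : (1 : Matrix (Fin n) (Fin n) ℝ).map Complex.ofReal = 1 :=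
    Matrix.map_one _ Complex.ofReal_zero Complex.ofReal_one
  set u : (Matrix (Fin n) (Fin n) ℂ)ˣ :=
    ⟨V.map Complex.ofReal, V'.map Complex.ofReal,
      by rw [← map_mul', hVV', map_one'],
      by rw [← map_mul', hV'V, map_one']⟩ with hudef
  have hspec : spectrum ℂ
      (((W + β • T)⁻¹ * (T - β • W) * (α • W + T)⁻¹ * (W - α • T)).map Complex.ofReal)
      = Set.range (fun i => (g i : ℂ)) := by
    rw [hG, map_mul', map_mul']
    have hdmap : (diagonal g).map Complex.ofReal = diagonal (fun i => (g i : ℂ)) :=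
      Matrix.diagonal_map Complex.ofReal_zero
    rw [hdmap]
    have hu1 : (↑u : Matrix (Fin n) (Fin n) ℂ) = V.map Complex.ofReal := rfl
    have hu2 : (↑u⁻¹ : Matrix (Fin n) (Fin n) ℂ) = V'.map Complex.ofReal := rfl
    rw [← hu1, ← hu2, spectrum.units_conjugate, spectrum_diagonal]
  -- conclude
  rw [spectralRadius, hspec, iSup_range]
  have hgn : ∀ i, ‖(g i : ℂ)‖₊ < 1 := by
    intro i
    rw [Complex.nnnorm_real]
    rw [← NNReal.coe_lt_coe]
    simpa [Real.norm_eq_abs] using hg i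
  have hb : (Finset.univ.sup fun i : Fin n => ‖(g i : ℂ)‖₊) < 1 :=
    (Finset.sup_lt_iff (show (⊥ : NNReal) < 1 by norm_num)).2 (fun i _ => hgn i)
  refine lt_of_le_of_lt
    (b := ((Finset.univ.sup fun i : Fin n => ‖(g i : ℂ)‖₊ : NNReal) : ENNReal))
    (iSup_le fun i => ?_) ?_
  · exact ENNReal.coe_le_coe.2
      (Finset.le_sup (f := fun i : Fin n => ‖(g i : ℂ)‖₊) (Finset.mem_univ i))
  · exact_mod_cast hb
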